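/- On Kleene's first model K_1, for every ordinal α the relations ∼_{α+1} and ∼_{α+2} are many-one equivalent (as sets of pairs of codes for closed terms). -/

import Mathlib

/-- A partial applicative structure: a set with a partial binary application. -/
structure PAS where
  carrier : Type
  app : carrier → carrier → Part carrier

namespace PAS

/-- Closed terms over a partial applicative structure. -/
inductive Term (A : PAS) : Type
  | const : A.carrier → Term A
  | app : Term A → Term A → Term A

/-- Evaluation of a closed term (a partial element of the carrier). -/
def Term.eval {A : PAS} : Term A → Part A.carrier
  | .const a => Part.some a
  | .app s t => do
      let x ← Term.eval s
      let y ← Term.eval t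
      A.app x y

/-- Kleene equality of closed terms: both undefined, or both defined and equal. -/
def KEq {A : PAS} (s t : Term A) : Prop := s.eval = t.eval

/-- The transfinite hierarchy of extensionality relations `∼_α` on closed terms:
`s ∼_0 t` iff `s ≃ t`; `s ∼_{α+1} t` iff `∀ x, s·x ∼_α t·x`; and at limits,
`s ∼_α t` iff `s ∼_β t` for some `β < α`. -/
noncomputable def sim (A : PAS) (α : Ordinal) : Term A → Term A → Prop :=
  Ordinal.limitRecOn α
    (fun s t => KEq s t)
    (fun _ ih s t => ∀ x : A.carrier, ih (s.app (.const x)) (t.app (.const x)))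
    (fun β _ ih s t => ∃ γ, ∃ h : γ < β, ih γ h s t)

end PAS

/-- A partial combinatory algebra: a partial applicative structure with
combinators `K` and `S` such that `K·a·b = a`, `S·a·b` is defined, and
`S·a·b·c ≃ a·c·(b·c)`. -/
structure PCA extends PAS where
  K : carrier
  S : carrier
  K_spec : ∀ a b : carrier, (app K a).bind (fun x => app x b) = Part.some a
  S_defined : ∀ a b : carrier, ((app S a).bind (fun x => app x b)).Dom
  S_spec : ∀ a b c : carrier,
    ((app S a).bind (fun x => app x b)).bind (fun x => app x c)
      = (app a c).bind (fun u => (app b c).bind (fun v => app u v))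

/-- Kleene's first model: the pca on ω with application n·m = Φ_n(m). -/
def K1 : PAS :=
  ⟨ℕ, fun n m => (Denumerable.ofNat Nat.Partrec.Code n).eval m⟩

/-- Iterated application of a term to a finite list of elements: t·σ(0)·…·σ(k-1). -/
def PAS.Term.appList {A : PAS} (t : PAS.Term A) (σ : List A.carrier) : PAS.Term A :=
  σ.foldl (fun s x => s.app (.const x)) t

/-- An element is hereditarily total if every iterated application to elements is defined. -/
def PAS.HeredTotal (A : PAS) (a : A.carrier) : Prop :=
  ∀ σ : List A.carrier, ((PAS.Term.const a).appList σ).eval.Dom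

/-- A coding of the closed terms over K₁ by natural numbers. -/
def termOfNat : ℕ → K1.Term
  | 0 => .const (0 : ℕ)
  | (n + 1) =>
    if n.unpair.1 = 0 then .const (n.unpair.2 : ℕ)
    else .app (termOfNat n.unpair.2.unpair.1) (termOfNat n.unpair.2.unpair.2)
  decreasing_by
    all_goals
      have h1 : n.unpair.2 ≤ n := Nat.unpair_right_le n
      have h2 : n.unpair.2.unpair.1 ≤ n.unpair.2 := Nat.unpair_left_le _
      have h3 : n.unpair.2.unpair.2 ≤ n.unpair.2 := Nat.unpair_right_le _
      omega

section Aux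

open Nat.Partrec (Code)
open Nat.Partrec.Code

theorem PAS.Term.eval_app' {A : PAS} (s t : PAS.Term A) :
    (PAS.Term.app s t).eval = s.eval.bind (fun x => t.eval.bind fun y => A.app x y) := rfl

theorem PAS.sim_zero {A : PAS} (s t : PAS.Term A) : A.sim 0 s t ↔ PAS.KEq s t := by
  unfold PAS.sim
  rw [Ordinal.limitRecOn_zero]

theorem PAS.sim_succ' {A : PAS} (α : Ordinal) (s t : PAS.Term A) :
    A.sim (Order.succ α) s t ↔ ∀ x : A.carrier,
      A.sim α (s.app (.const x)) (t.app (.const x)) := by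
  unfold PAS.sim
  rw [Ordinal.limitRecOn_succ]

theorem PAS.sim_succ {A : PAS} (α : Ordinal) (s t : PAS.Term A) :
    A.sim (α + 1) s t ↔ ∀ x : A.carrier,
      A.sim α (s.app (.const x)) (t.app (.const x)) := by
  rw [Ordinal.add_one_eq_succ, PAS.sim_succ']

theorem PAS.sim_limit {A : PAS} {α : Ordinal} (h : Order.IsSuccLimit α) (s t : PAS.Term A) :
    A.sim α s t ↔ ∃ γ, ∃ _ : γ < α, A.sim γ s t := by
  unfold PAS.sim
  rw [Ordinal.limitRecOn_limit _ _ _ _ h]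

theorem PAS.sim_congr {A : PAS} (α : Ordinal) :
    ∀ s s' t t' : PAS.Term A, s.eval = s'.eval → t.eval = t'.eval →
      (A.sim α s t ↔ A.sim α s' t') := by
  induction α using Ordinal.limitRecOn with
  | zero =>
    intro s s' t t' hs ht
    rw [PAS.sim_zero, PAS.sim_zero]
    unfold PAS.KEq
    rw [hs, ht]
  | add_one β ih =>
    intro s s' t t' hs ht
    rw [PAS.sim_succ, PAS.sim_succ]
    refine forall_congr' fun x => ih _ _ _ _ ?_ ?_ <;>
      simp only [PAS.Term.eval_app', hs, ht]
  | limit β hβ ih =>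
    intro s s' t t' hs ht
    rw [PAS.sim_limit hβ, PAS.sim_limit hβ]
    exact exists_congr fun γ => exists_congr fun hγ => ih γ hγ _ _ _ _ hs ht

theorem K1_app_def (n m : ℕ) :
    K1.app n m = (Denumerable.ofNat Nat.Partrec.Code n).eval m := rfl

theorem termOfNat_const (c : ℕ) : termOfNat (Nat.pair 0 c + 1) = .const c := by
  rw [termOfNat]
  simp

theorem termOfNat_app (a b : ℕ) :
    termOfNat (Nat.pair 1 (Nat.pair a b) + 1) = .app (termOfNat a) (termOfNat b) := by
  rw [termOfNat]
  simp

theorem K1_bind_some (a : ℕ) (f : K1.carrier → Part K1.carrier) :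
    (Part.some (α := K1.carrier) a).bind f = f a := Part.bind_some _ _

theorem K1_bind_some' (a : ℕ) (f : K1.carrier → Part K1.carrier) :
    Part.bind (α := K1.carrier) (Part.some (α := ℕ) a) f = f a := Part.bind_some _ _

end Aux

/-- On K₁, for every ordinal α the relations ∼_{α+1} and ∼_{α+2},
as sets of pairs of codes of closed terms, are many-one equivalent. -/
theorem stmt13 (α : Ordinal) :
    ManyOneReducible (fun p : ℕ × ℕ => K1.sim (α + 1) (termOfNat p.1) (termOfNat p.2))
      (fun p : ℕ × ℕ => K1.sim (α + 2) (termOfNat p.1) (termOfNat p.2)) ∧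
    ManyOneReducible (fun p : ℕ × ℕ => K1.sim (α + 2) (termOfNat p.1) (termOfNat p.2))
      (fun p : ℕ × ℕ => K1.sim (α + 1) (termOfNat p.1) (termOfNat p.2)) := by
  classical
  have two : (α + 2 : Ordinal) = (α + 1) + 1 := by
    rw [add_assoc, one_add_one_eq_two]
  -- the K combinator code
  have hkf : Nat.Partrec fun a : ℕ =>
      Part.some (Encodable.encode (Nat.Partrec.Code.const a)) :=
    Partrec.nat_iff.mp ((Primrec.encode.comp Nat.Partrec.Code.primrec_const).to_comp)
  obtain ⟨cK, hcK⟩ := Nat.Partrec.Code.exists_code.mp hkf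
  set kNum : ℕ := Encodable.encode cK with hkNum
  have hK1 : ∀ a : ℕ, K1.app kNum a
      = Part.some (Encodable.encode (Nat.Partrec.Code.const a)) := by
    intro a
    rw [K1_app_def, hkNum, Denumerable.ofNat_encode, hcK]
  have hK2 : ∀ a b : ℕ,
      K1.app (Encodable.encode (Nat.Partrec.Code.const a)) b = Part.some a := by
    intro a b
    rw [K1_app_def, Denumerable.ofNat_encode, Nat.Partrec.Code.eval_const]
  have evalK : ∀ (s : PAS.Term K1) (x : ℕ),
      (PAS.Term.app (.app (.const kNum) s) (.const x)).eval = s.eval := by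
    intro s x
    have hK1' : ∀ a : K1.carrier, K1.app kNum a
        = Part.some (α := K1.carrier) (Encodable.encode (Nat.Partrec.Code.const a)) := hK1
    have hK2' : ∀ (a : K1.carrier) (b : ℕ), K1.app (Encodable.encode (Nat.Partrec.Code.const a)) b
        = Part.some (α := K1.carrier) a := hK2
    simp [PAS.Term.eval, Part.bind_assoc, hK1', hK2', Part.bind_some, Part.bind_eq_bind, K1_bind_some, K1_bind_some']
  -- the pairing-collapse combinator code
  have hh : Partrec fun m : ℕ =>
      ((Denumerable.ofNat Nat.Partrec.Code m.unpair.1).eval m.unpair.2.unpair.1).bind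
        fun u => (Denumerable.ofNat Nat.Partrec.Code u).eval m.unpair.2.unpair.2 := by
    apply Partrec.bind
    · exact Nat.Partrec.Code.eval_part.comp
        ((Computable.ofNat _).comp ((Primrec.fst.comp Primrec.unpair).to_comp))
        ((Primrec.fst.comp (Primrec.unpair.comp
          (Primrec.snd.comp Primrec.unpair))).to_comp)
    · exact (Nat.Partrec.Code.eval_part.comp
        ((Computable.ofNat _).comp Computable.snd)
        ((Primrec.snd.comp (Primrec.unpair.comp (Primrec.snd.comp
          (Primrec.unpair.comp Primrec.fst)))).to_comp)).to₂
  obtain ⟨cH, hcH⟩ := Nat.Partrec.Code.exists_code.mp (Partrec.nat_iff.mp hh)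
  have hGf : Nat.Partrec fun v : ℕ =>
      Part.some (Encodable.encode (cH.curry v)) :=
    Partrec.nat_iff.mp ((Primrec.encode.comp
      (Nat.Partrec.Code.primrec₂_curry.comp (Primrec.const cH) Primrec.id)).to_comp)
  obtain ⟨cF, hcF⟩ := Nat.Partrec.Code.exists_code.mp hGf
  set FNum : ℕ := Encodable.encode cF with hFNum
  have hF1 : ∀ v : ℕ, K1.app FNum v = Part.some (Encodable.encode (cH.curry v)) := by
    intro v
    rw [K1_app_def, hFNum, Denumerable.ofNat_encode, hcF]
  have hF2 : ∀ v n : ℕ, K1.app (Encodable.encode (cH.curry v)) n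
      = (K1.app v n.unpair.1).bind fun u => K1.app u n.unpair.2 := by
    intro v n
    rw [K1_app_def, Denumerable.ofNat_encode, Nat.Partrec.Code.eval_curry, hcH]
    simp only [Nat.unpair_pair]
    rfl
  have evalF : ∀ (s : PAS.Term K1) (n : ℕ),
      (PAS.Term.app (.app (.const FNum) s) (.const n)).eval
        = s.eval.bind fun v => (K1.app v n.unpair.1).bind fun u =>
            K1.app u n.unpair.2 := by
    intro s n
    have hF1' : ∀ v : K1.carrier, K1.app FNum v
        = Part.some (α := K1.carrier) (Encodable.encode (cH.curry v)) := hF1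
    have hF2' : ∀ (v : K1.carrier) (n : ℕ), K1.app (Encodable.encode (cH.curry v)) n
        = (K1.app v n.unpair.1).bind fun u => K1.app u n.unpair.2 := hF2
    simp [PAS.Term.eval, Part.bind_assoc, hF1', hF2', Part.bind_some, Part.bind_eq_bind, K1_bind_some, K1_bind_some']
  have evalApp2 : ∀ (s : PAS.Term K1) (a b : ℕ),
      (PAS.Term.app (.app s (.const a)) (.const b)).eval
        = s.eval.bind fun v => (K1.app v a).bind fun u => K1.app u b := by
    intro s a b
    simp [PAS.Term.eval, Part.bind_assoc, Part.bind_some, Part.bind_eq_bind, K1_bind_some, K1_bind_some']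
  -- the two key equivalences
  have key1 : ∀ s t : PAS.Term K1, K1.sim (α + 1) s t ↔
      K1.sim (α + 2) (.app (.const kNum) s) (.app (.const kNum) t) := by
    intro s t
    rw [two]
    conv_rhs => rw [PAS.sim_succ]
    constructor
    · intro h x
      exact (PAS.sim_congr (α + 1) s _ t _ (evalK s x).symm (evalK t x).symm).mp h
    · intro h
      exact (PAS.sim_congr (α + 1) _ s _ t (evalK s 0) (evalK t 0)).mp (h (0 : ℕ))
  have key2 : ∀ s t : PAS.Term K1, K1.sim (α + 2) s t ↔
      K1.sim (α + 1) (.app (.const FNum) s) (.app (.const FNum) t) := by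
    intro s t
    rw [two]
    conv_lhs => rw [PAS.sim_succ]
    simp only [PAS.sim_succ]
    constructor
    · intro h n
      exact (PAS.sim_congr α _ _ _ _
        ((evalApp2 s n.unpair.1 n.unpair.2).trans (evalF s n).symm)
        ((evalApp2 t n.unpair.1 n.unpair.2).trans (evalF t n).symm)).mp
        (h n.unpair.1 n.unpair.2)
    · intro h (a : ℕ) (b : ℕ)
      have e1 : (PAS.Term.app (.app (.const FNum) s)
          (.const (Nat.pair a b))).eval
          = (PAS.Term.app (.app s (.const a)) (.const b)).eval := by
        rw [evalF, evalApp2, Nat.unpair_pair]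
      have e2 : (PAS.Term.app (.app (.const FNum) t)
          (.const (Nat.pair a b))).eval
          = (PAS.Term.app (.app t (.const a)) (.const b)).eval := by
        rw [evalF, evalApp2, Nat.unpair_pair]
      exact (PAS.sim_congr α _ _ _ _ e1 e2).mp (h (Nat.pair a b))
  -- the computable reduction functions
  have hred : ∀ c : ℕ, Computable fun p : ℕ × ℕ =>
      ((Nat.pair 1 (Nat.pair (Nat.pair 0 c + 1) p.1) + 1,
        Nat.pair 1 (Nat.pair (Nat.pair 0 c + 1) p.2) + 1) : ℕ × ℕ) := by
    intro c
    have h1 : Primrec fun n : ℕ => Nat.pair 1 (Nat.pair (Nat.pair 0 c + 1) n) + 1 :=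
      Primrec.succ.comp (Primrec₂.natPair.comp (Primrec.const 1)
        (Primrec₂.natPair.comp (Primrec.const (Nat.pair 0 c + 1)) Primrec.id))
    exact ((h1.comp Primrec.fst).pair (h1.comp Primrec.snd)).to_comp
  constructor
  · refine ⟨fun p => (Nat.pair 1 (Nat.pair (Nat.pair 0 kNum + 1) p.1) + 1,
      Nat.pair 1 (Nat.pair (Nat.pair 0 kNum + 1) p.2) + 1), hred kNum, ?_⟩
    intro p
    simp only [termOfNat_app, termOfNat_const]
    exact key1 _ _
  · refine ⟨fun p => (Nat.pair 1 (Nat.pair (Nat.pair 0 FNum + 1) p.1) + 1,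
      Nat.pair 1 (Nat.pair (Nat.pair 0 FNum + 1) p.2) + 1), hred FNum, ?_⟩
    intro p
    simp only [termOfNat_app, termOfNat_const]
    exact key2 _ _
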